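/- arXiv:2111.07430 — 3 statements merged into one kernel-verified Lean document; each statement's English description precedes it below -/
import Mathlib

section
/- Let a_i, â_i ∈ ℝ^d, b_i ∈ ℝ, V symmetric positive definite, β > 0, L > 0, and suppose ‖â_i − a_i‖_V ≤ β for all i ∈ [1,m]. Define X_in = {x : ∀i, a_i^⊤ x + 2βL/√(λ_min(V)) ≤ b_i} and X̂ = {x : ∀i, â_i^⊤ x + β‖x‖_{V^{-1}} ≤ b_i}. Then every x ∈ X_in with ‖x‖₂ ≤ L lies in X̂. -/
open Matrix

private lemma bilin_cs {d : ℕ} {V : Matrix (Fin d) (Fin d) ℝ} (hV : V.PosDef)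
    (u y : Fin d → ℝ) :
    (u ⬝ᵥ V.mulVec y) ^ 2 ≤ (u ⬝ᵥ V.mulVec u) * (y ⬝ᵥ V.mulVec y) := by
  have hVt : Vᵀ = V := by
    have := hV.1
    rwa [IsHermitian, conjTranspose_eq_transpose_of_trivial] at this
  have hsymm : ∀ v w : Fin d → ℝ, v ⬝ᵥ V.mulVec w = w ⬝ᵥ V.mulVec v := by
    intro v w
    rw [dotProduct_mulVec, dotProduct_comm, ← mulVec_transpose, hVt]
  have hnn : ∀ v : Fin d → ℝ, 0 ≤ v ⬝ᵥ V.mulVec v := by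
    intro v
    have := hV.posSemidef.dotProduct_mulVec_nonneg v
    simpa using this
  have key : ∀ t : ℝ, 0 ≤ (y ⬝ᵥ V.mulVec y) * (t * t) + (2 * (u ⬝ᵥ V.mulVec y)) * t
      + (u ⬝ᵥ V.mulVec u) := by
    intro t
    have h := hnn (u + t • y)
    have hexp : (u + t • y) ⬝ᵥ V.mulVec (u + t • y)
        = (y ⬝ᵥ V.mulVec y) * (t * t) + (2 * (u ⬝ᵥ V.mulVec y)) * t + (u ⬝ᵥ V.mulVec u) := by
      simp only [mulVec_add, mulVec_smul, add_dotProduct, dotProduct_add, dotProduct_smul,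
        smul_dotProduct, smul_eq_mul, hsymm y u]
      ring
    linarith [hexp ▸ h]
  have hd := discrim_le_zero key
  rw [discrim] at hd
  nlinarith [hd]

private lemma quad_lower {d : ℕ} (hd : 0 < d) {V : Matrix (Fin d) (Fin d) ℝ} (hV : V.PosDef)
    (y : Fin d → ℝ) :
    (⨅ i, hV.1.eigenvalues i) * (y ⬝ᵥ y) ≤ y ⬝ᵥ V.mulVec y := by
  haveI : Nonempty (Fin d) := Fin.pos_iff_nonempty.mp hd
  set U : Matrix (Fin d) (Fin d) ℝ := (hV.1.eigenvectorUnitary : Matrix (Fin d) (Fin d) ℝ) with hU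
  have hUmem := hV.1.eigenvectorUnitary.2
  have hUU : U * star U = 1 := (mem_unitaryGroup_iff).mp hUmem
  set z : Fin d → ℝ := Uᵀ *ᵥ y with hz
  have hstar : star U = Uᵀ := by
    rw [star_eq_conjTranspose, conjTranspose_eq_transpose_of_trivial]
  have hvecMul : y ᵥ* U = z := by rw [hz, mulVec_transpose]
  have hzz : z ⬝ᵥ z = y ⬝ᵥ y := by
    nth_rewrite 1 [hz]
    rw [mulVec_transpose, dotProduct_mulVec, ← hstar, vecMul_vecMul, hUU, vecMul_one]
  have hquad : y ⬝ᵥ V.mulVec y = ∑ i, (hV.1.eigenvalues i) * (z i) ^ 2 := by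
    nth_rewrite 1 [hV.1.spectral_theorem]
    rw [Unitary.conjStarAlgAut_apply, ← mulVec_mulVec, ← mulVec_mulVec, hstar, dotProduct_mulVec, hvecMul, ← hz]
    rw [dotProduct, Finset.sum_congr rfl]
    intro i _
    rw [mulVec_diagonal]
    simp [Function.comp]
    ring
  rw [hquad, ← hzz, dotProduct, Finset.mul_sum]
  apply Finset.sum_le_sum
  intro i _
  have hle : (⨅ j, hV.1.eigenvalues j) ≤ hV.1.eigenvalues i :=
    ciInf_le (Set.Finite.bddBelow (Set.finite_range _)) i
  have := sq_nonneg (z i)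
  nlinarith

/-- The shrunk polytope (intersected with the norm ball)
is contained in the conservative safe set. -/
theorem shrunk_subset_conservative
    (d m : ℕ) (hd : 0 < d)
    (a ahat : Fin m → (Fin d → ℝ)) (b : Fin m → ℝ)
    (V : Matrix (Fin d) (Fin d) ℝ) (hV : V.PosDef)
    (β L lammin : ℝ) (hβ : 0 < β) (hL : 0 < L)
    (hlam : lammin = ⨅ i, hV.1.eigenvalues i)
    (hconf : ∀ i, Real.sqrt ((ahat i - a i) ⬝ᵥ V.mulVec (ahat i - a i)) ≤ β)
    (x : Fin d → ℝ)
    (hxin : ∀ i, a i ⬝ᵥ x + 2 * β * L / Real.sqrt lammin ≤ b i)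
    (hxnorm : Real.sqrt (x ⬝ᵥ x) ≤ L) :
    ∀ i, ahat i ⬝ᵥ x + β * Real.sqrt (x ⬝ᵥ V⁻¹.mulVec x) ≤ b i := by
  haveI : Nonempty (Fin d) := Fin.pos_iff_nonempty.mp hd
  -- lammin > 0
  have hlampos : 0 < lammin := by
    obtain ⟨j, hj⟩ := exists_eq_ciInf_of_finite (f := hV.1.eigenvalues)
    rw [hlam, ← hj]
    exact hV.eigenvalues_pos j
  have hVunit : IsUnit V.det := hV.det_pos.ne'.isUnit
  set y : Fin d → ℝ := V⁻¹.mulVec x with hy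
  have hVy : V.mulVec y = x := by
    rw [hy, mulVec_mulVec, mul_nonsing_inv V hVunit, one_mulVec]
  set t : ℝ := x ⬝ᵥ V⁻¹.mulVec x with ht
  have htyVy : t = y ⬝ᵥ V.mulVec y := by rw [ht, hVy, hy, dotProduct_comm]
  have ht0 : 0 ≤ t := by
    rw [htyVy]
    have := hV.posSemidef.dotProduct_mulVec_nonneg y
    simpa using this
  -- x ⬝ᵥ x ≤ L ^ 2
  have hxx0 : 0 ≤ x ⬝ᵥ x := by
    have := hV.posSemidef.dotProduct_mulVec_nonneg x
    exact Finset.sum_nonneg fun i _ => mul_self_nonneg _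
  have hxxL : x ⬝ᵥ x ≤ L ^ 2 := by
    have := Real.sq_sqrt hxx0
    nlinarith [hxnorm, Real.sqrt_nonneg (x ⬝ᵥ x)]
  -- t ≤ L^2 / lammin, i.e. lammin * t ≤ L^2
  have hql := quad_lower hd hV y
  rw [← hlam, ← htyVy] at hql
  have hcs2 : t ^ 2 ≤ (x ⬝ᵥ x) * (y ⬝ᵥ y) := by
    have := Finset.sum_mul_sq_le_sq_mul_sq Finset.univ x y
    have e : x ⬝ᵥ y = t := rfl
    rw [← e]
    simpa [dotProduct, pow_two] using this
  have hyy0 : 0 ≤ y ⬝ᵥ y := by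
    exact Finset.sum_nonneg fun i _ => mul_self_nonneg _
  have htL : lammin * t ≤ L ^ 2 := by
    rcases eq_or_lt_of_le ht0 with h0 | hpos
    · rw [← h0, mul_zero]; positivity
    · have h1 : lammin * (y ⬝ᵥ y) ≤ t := hql
      have h2 : t ^ 2 ≤ L ^ 2 * (y ⬝ᵥ y) := le_trans hcs2 (by nlinarith)
      nlinarith
  have hsqrt_t : Real.sqrt t ≤ L / Real.sqrt lammin := by
    rw [le_div_iff₀ (Real.sqrt_pos.mpr hlampos)]
    have : Real.sqrt t * Real.sqrt lammin = Real.sqrt (lammin * t) := by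
      rw [Real.sqrt_mul hlampos.le, mul_comm]
    rw [this]
    calc Real.sqrt (lammin * t) ≤ Real.sqrt (L ^ 2) := Real.sqrt_le_sqrt htL
      _ = L := Real.sqrt_sq hL.le
  intro i
  set u : Fin d → ℝ := ahat i - a i with hu
  -- u ⬝ᵥ x ≤ β * sqrt t
  have huVu0 : 0 ≤ u ⬝ᵥ V.mulVec u := by
    have := hV.posSemidef.dotProduct_mulVec_nonneg u; simpa using this
  have huVu : u ⬝ᵥ V.mulVec u ≤ β ^ 2 := by
    have h := hconf i
    rw [← hu] at h
    nlinarith [Real.sq_sqrt huVu0, Real.sqrt_nonneg (u ⬝ᵥ V.mulVec u)]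
  have hyx : y ⬝ᵥ x = t := by rw [ht, dotProduct_comm, hy]
  have hcs1 : (u ⬝ᵥ x) ^ 2 ≤ β ^ 2 * t := by
    have := bilin_cs hV u y
    rw [hVy, hyx] at this
    nlinarith
  have hux : u ⬝ᵥ x ≤ β * Real.sqrt t := by
    have h1 : u ⬝ᵥ x ≤ Real.sqrt ((u ⬝ᵥ x) ^ 2) := by
      rw [Real.sqrt_sq_eq_abs]; exact le_abs_self _
    have h2 : Real.sqrt ((u ⬝ᵥ x) ^ 2) ≤ Real.sqrt (β ^ 2 * t) := Real.sqrt_le_sqrt hcs1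
    have h3 : Real.sqrt (β ^ 2 * t) = β * Real.sqrt t := by
      rw [Real.sqrt_mul (sq_nonneg β), Real.sqrt_sq hβ.le]
    linarith [h3 ▸ h2]
  -- combine
  have hahat : ahat i ⬝ᵥ x = a i ⬝ᵥ x + u ⬝ᵥ x := by
    rw [hu, sub_dotProduct]; ring
  have hβt : β * Real.sqrt t ≤ β * (L / Real.sqrt lammin) :=
    mul_le_mul_of_nonneg_left hsqrt_t hβ.le
  have hfin : 2 * (β * (L / Real.sqrt lammin)) = 2 * β * L / Real.sqrt lammin := by
    ring
  have := hxin i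
  rw [hahat]
  linarith
end

section
/- Let f_t : ℝ^d → ℝ, t = 1,...,T, be convex differentiable functions with ‖∇f_t(x)‖ ≤ G on a nonempty closed convex set K with ‖x‖ ≤ L for all x ∈ K. Let x_1 ∈ K and x_{t+1} = Π_K(x_t − η ∇f_t(x_t)) with η = 2L/(G√T). Then for every x* ∈ K, ∑_{t=1}^T (f_t(x_t) − f_t(x*)) ≤ 2LG√T. -/
open RealInnerProductSpace

variable {E : Type*} [NormedAddCommGroup E] [InnerProductSpace ℝ E] [CompleteSpace E]

/-- Convex gradient inequality. -/
lemma grad_ineq {f : E → ℝ} {g x y : E} (hf : ConvexOn ℝ Set.univ f)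
    (hg : HasGradientAt f g x) : ⟪g, y - x⟫ ≤ f y - f x := by
  -- h s = f (x + s • (y - x))
  set l : ℝ →ᵃ[ℝ] E := AffineMap.lineMap x y with hl
  have hconv : ConvexOn ℝ Set.univ (f ∘ l) := by
    have := hf.comp_affineMap l
    simpa using this
  have hline : HasDerivAt (fun s : ℝ => l s) (y - x) 0 := by
    have : (fun s : ℝ => l s) = fun s : ℝ => s • (y - x) + x := by
      funext s; simp [hl, AffineMap.lineMap_apply]
    rw [this]
    simpa using ((hasDerivAt_id (0:ℝ)).smul_const (y - x)).add_const x
  have hd : HasDerivAt (f ∘ l) ⟪g, y - x⟫ 0 := by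
    have hF := hg.hasFDerivAt
    have := hF.comp_hasDerivAt_of_eq (x := (0:ℝ)) hline (by simp [hl])
    simpa [Function.comp, InnerProductSpace.toDual_apply_apply] using this
  -- slope bound: for s ∈ (0,1], (h s - h 0)/s ≤ h 1 - h 0
  have hslope : ∀ s : ℝ, s ∈ Set.Ioc (0:ℝ) 1 → slope (f ∘ l) 0 s ≤ (f ∘ l) 1 - (f ∘ l) 0 := by
    intro s hs
    have h1 : (f ∘ l) s ≤ (1 - s) * (f ∘ l) 0 + s * (f ∘ l) 1 := by
      have := hconv.2 (Set.mem_univ (0:ℝ)) (Set.mem_univ (1:ℝ))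
        (by linarith [hs.2] : (0:ℝ) ≤ 1 - s) (le_of_lt hs.1) (by ring)
      simpa [smul_eq_mul] using this
    rw [slope_def_field, sub_zero, div_le_iff₀ hs.1]
    nlinarith [hs.1]
  have htend : Filter.Tendsto (slope (f ∘ l) 0) (nhdsWithin 0 (Set.Ioi 0)) (nhds ⟪g, y - x⟫) := by
    have := hasDerivAt_iff_tendsto_slope.mp hd
    exact this.mono_left (nhdsWithin_mono _ (fun s hs => ne_of_gt hs))
  have hle : ⟪g, y - x⟫ ≤ (f ∘ l) 1 - (f ∘ l) 0 := by
    refine le_of_tendsto htend ?_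
    filter_upwards [Ioc_mem_nhdsGT (by norm_num : (0:ℝ) < 1)] with s hs
    exact hslope s hs
  simpa [hl, AffineMap.lineMap_apply] using hle

lemma proj_sq_le {K : Set E} (hKcx : Convex ℝ K) (hKne : K.Nonempty)
    {P : E → E} (hP : ∀ x, P x ∈ K ∧ ∀ y ∈ K, ‖x - P x‖ ≤ ‖x - y‖)
    (y : E) {z : E} (hz : z ∈ K) : ‖P y - z‖ ^ 2 ≤ ‖y - z‖ ^ 2 := by
  haveI : Nonempty K := hKne.to_subtype
  have hinf : ‖y - P y‖ = ⨅ w : K, ‖y - (w : E)‖ := by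
    refine le_antisymm (le_ciInf fun w => (hP y).2 w w.2) ?_
    have hbdd : BddBelow (Set.range fun w : K => ‖y - (w : E)‖) := by
      refine ⟨0, ?_⟩; rintro r ⟨w, rfl⟩; positivity
    exact ciInf_le hbdd (⟨P y, (hP y).1⟩ : K)
  have hvar : ⟪y - P y, z - P y⟫ ≤ 0 :=
    ((norm_eq_iInf_iff_real_inner_le_zero hKcx (hP y).1).mp hinf) z hz
  have hdecomp : ‖y - z‖ ^ 2 = ‖y - P y‖ ^ 2 + 2 * ⟪y - P y, P y - z⟫ + ‖P y - z‖ ^ 2 := by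
    have := norm_add_sq_real (y - P y) (P y - z)
    simpa [sub_add_sub_cancel] using this
  have : ⟪y - P y, P y - z⟫ = - ⟪y - P y, z - P y⟫ := by
    rw [← inner_neg_right]; congr 1; abel
  nlinarith [sq_nonneg ‖y - P y‖]

/-- Online projected gradient descent regret bound. -/
theorem ogd_regret
    (d T : ℕ) (hT : 0 < T) (G L η : ℝ) (hG : 0 < G) (hL : 0 < L)
    (K : Set (EuclideanSpace ℝ (Fin d)))
    (hKne : K.Nonempty) (hKcl : IsClosed K) (hKcx : Convex ℝ K)
    (hKbd : ∀ x ∈ K, ‖x‖ ≤ L)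
    (P : EuclideanSpace ℝ (Fin d) → EuclideanSpace ℝ (Fin d))
    (hP : ∀ x, P x ∈ K ∧ ∀ y ∈ K, ‖x - P x‖ ≤ ‖x - y‖)
    (f : ℕ → EuclideanSpace ℝ (Fin d) → ℝ)
    (g : ℕ → EuclideanSpace ℝ (Fin d) → EuclideanSpace ℝ (Fin d))
    (hconv : ∀ t, ConvexOn ℝ Set.univ (f t))
    (hgrad : ∀ t x, HasGradientAt (f t) (g t x) x)
    (hgbd : ∀ t, ∀ x ∈ K, ‖g t x‖ ≤ G)
    (x : ℕ → EuclideanSpace ℝ (Fin d))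
    (hx0 : x 0 ∈ K)
    (hη : η = 2 * L / (G * Real.sqrt T))
    (hstep : ∀ t, x (t + 1) = P (x t - η • g t (x t)))
    (xstar : EuclideanSpace ℝ (Fin d)) (hxstar : xstar ∈ K) :
    ∑ t ∈ Finset.range T, (f t (x t) - f t xstar) ≤ 2 * L * G * Real.sqrt T := by
  have hsqrt : 0 < Real.sqrt T := Real.sqrt_pos.mpr (by exact_mod_cast hT)
  have hηpos : 0 < η := by rw [hη]; positivity
  have hxK : ∀ t, x t ∈ K := by
    intro t
    induction t with
    | zero => exact hx0
    | succ n _ => rw [hstep n]; exact (hP _).1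
  set a : ℕ → ℝ := fun t => ‖x t - xstar‖ ^ 2 with ha
  have key : ∀ t, 2 * η * (f t (x t) - f t xstar) ≤ (a t - a (t + 1)) + η ^ 2 * G ^ 2 := by
    intro t
    have h1 : f t (x t) - f t xstar ≤ ⟪g t (x t), x t - xstar⟫ := by
      have h' := grad_ineq (hconv t) (hgrad t (x t)) (y := xstar)
      have he : ⟪g t (x t), xstar - x t⟫ = -⟪g t (x t), x t - xstar⟫ := by
        rw [← inner_neg_right]; congr 1; abel
      rw [he] at h'
      linarith
    have hproj := proj_sq_le hKcx hKne hP (x t - η • g t (x t)) hxstar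
    rw [← hstep t] at hproj
    have hexp : ‖x t - η • g t (x t) - xstar‖ ^ 2 =
        ‖x t - xstar‖ ^ 2 - 2 * η * ⟪g t (x t), x t - xstar⟫ + η ^ 2 * ‖g t (x t)‖ ^ 2 := by
      have hre : x t - η • g t (x t) - xstar = (x t - xstar) - η • g t (x t) := by abel
      rw [hre, norm_sub_sq_real, real_inner_smul_right, norm_smul, Real.norm_eq_abs,
        abs_of_pos hηpos, real_inner_comm]
      ring
    have h2 : a (t + 1) ≤ a t - 2 * η * ⟪g t (x t), x t - xstar⟫ + η ^ 2 * ‖g t (x t)‖ ^ 2 := by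
      simp only [ha]
      calc ‖x (t + 1) - xstar‖ ^ 2 ≤ ‖x t - η • g t (x t) - xstar‖ ^ 2 := hproj
        _ = _ := hexp
    have hG2 : ‖g t (x t)‖ ^ 2 ≤ G ^ 2 := by
      nlinarith [hgbd t (x t) (hxK t), norm_nonneg (g t (x t))]
    have h3 := mul_le_mul_of_nonneg_left h1 (by positivity : (0:ℝ) ≤ 2 * η)
    nlinarith [sq_nonneg η]
  have hsum : 2 * η * ∑ t ∈ Finset.range T, (f t (x t) - f t xstar)
      ≤ (a 0 - a T) + T * (η ^ 2 * G ^ 2) := by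
    rw [Finset.mul_sum]
    calc ∑ t ∈ Finset.range T, 2 * η * (f t (x t) - f t xstar)
        ≤ ∑ t ∈ Finset.range T, ((a t - a (t + 1)) + η ^ 2 * G ^ 2) :=
          Finset.sum_le_sum fun t _ => key t
      _ = (a 0 - a T) + T * (η ^ 2 * G ^ 2) := by
          rw [Finset.sum_add_distrib, Finset.sum_range_sub' a T, Finset.sum_const,
            Finset.card_range, nsmul_eq_mul]
  have ha0 : a 0 ≤ 4 * L ^ 2 := by
    have h0 : ‖x 0 - xstar‖ ≤ 2 * L := by
      calc ‖x 0 - xstar‖ ≤ ‖x 0‖ + ‖xstar‖ := norm_sub_le _ _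
        _ ≤ 2 * L := by linarith [hKbd _ hx0, hKbd _ hxstar]
    simp only [ha]
    nlinarith [norm_nonneg (x 0 - xstar)]
  have haT : 0 ≤ a T := sq_nonneg _
  have hs : Real.sqrt T * Real.sqrt T = (T : ℝ) := Real.mul_self_sqrt (Nat.cast_nonneg T)
  have hη2 : η * (G * Real.sqrt T) = 2 * L := by
    rw [hη]; field_simp
  have hfinal : 2 * η * ∑ t ∈ Finset.range T, (f t (x t) - f t xstar)
      ≤ 2 * η * (2 * L * G * Real.sqrt T) := by
    have hT2 : (T : ℝ) * (η ^ 2 * G ^ 2) = 4 * L ^ 2 := by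
      have h5 : (η * (G * Real.sqrt T)) ^ 2 = (2 * L) ^ 2 := by rw [hη2]
      linear_combination h5 - η ^ 2 * G ^ 2 * hs
    have hrhs : 2 * η * (2 * L * G * Real.sqrt T) = 8 * L ^ 2 := by
      have : 2 * η * (2 * L * G * Real.sqrt T) = 4 * L * (η * (G * Real.sqrt T)) := by ring
      rw [this, hη2]; ring
    rw [hrhs]
    linarith [hsum]
  exact le_of_mul_le_mul_left hfinal (by positivity : (0:ℝ) < 2 * η)
end

section
/- Let K be a nonempty closed convex subset of ℝ^d, f : ℝ^d → ℝ convex and differentiable with ‖∇f(y)‖ ≤ G for all y, x ∈ K, η > 0, and x' = Π_K(x − η∇f(x)). Then for any z ∈ K, 2∇f(x)^⊤(x − z) ≤ (‖x − z‖² − ‖x' − z‖²)/η + ηG². -/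
/-- One-step descent inequality for projected gradient descent. -/
theorem pgd_step_inequality
    (d : ℕ) (G η : ℝ) (hG : 0 < G) (hη : 0 < η)
    (K : Set (EuclideanSpace ℝ (Fin d)))
    (hKne : K.Nonempty) (hKcl : IsClosed K) (hKcx : Convex ℝ K)
    (P : EuclideanSpace ℝ (Fin d) → EuclideanSpace ℝ (Fin d))
    (hP : ∀ w, P w ∈ K ∧ ∀ y ∈ K, ‖w - P w‖ ≤ ‖w - y‖)
    (f : EuclideanSpace ℝ (Fin d) → ℝ)
    (g : EuclideanSpace ℝ (Fin d) → EuclideanSpace ℝ (Fin d))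
    (hconv : ConvexOn ℝ Set.univ f)
    (hgrad : ∀ y, HasGradientAt f (g y) y)
    (hgbd : ∀ y, ‖g y‖ ≤ G)
    (x : EuclideanSpace ℝ (Fin d)) (hx : x ∈ K)
    (x' : EuclideanSpace ℝ (Fin d)) (hx' : x' = P (x - η • g x))
    (z : EuclideanSpace ℝ (Fin d)) (hz : z ∈ K) :
    2 * (inner ℝ (g x) (x - z) : ℝ) ≤ (‖x - z‖ ^ 2 - ‖x' - z‖ ^ 2) / η + η * G ^ 2 := by
  set w : EuclideanSpace ℝ (Fin d) := x - η • g x with hw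
  obtain ⟨hmem, hmin⟩ := hP w
  -- x' is the proj of w; obstuse angle condition
  haveI : Nonempty K := ⟨⟨P w, hmem⟩⟩
  have hinf : ‖w - P w‖ = ⨅ y : K, ‖w - y‖ := by
    apply le_antisymm
    · exact le_ciInf fun y => hmin y y.2
    · exact ciInf_le ⟨0, fun r ⟨y, hy⟩ => hy ▸ norm_nonneg _⟩ (⟨P w, hmem⟩ : K)
  have hobt : ∀ y ∈ K, (inner ℝ (w - P w) (y - P w) : ℝ) ≤ 0 :=
    (norm_eq_iInf_iff_real_inner_le_zero hKcx hmem).mp hinf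
  have hz0 : (inner ℝ (w - x') (z - x') : ℝ) ≤ 0 := hx' ▸ hobt z hz
  -- ‖x' - z‖² ≤ ‖w - z‖²
  have hexp : ‖w - z‖ ^ 2 = ‖w - x'‖ ^ 2 + ‖x' - z‖ ^ 2 - 2 * (inner ℝ (w - x') (z - x') : ℝ) := by
    have h1 : w - z = (w - x') - (z - x') := by abel
    rw [h1, norm_sub_sq_real]
    have h2 : x' - z = -(z - x') := by abel
    rw [h2, norm_neg]
    ring
  have hle : ‖x' - z‖ ^ 2 ≤ ‖w - z‖ ^ 2 := by nlinarith [sq_nonneg ‖w - x'‖]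
  -- expand ‖w - z‖²
  have hexp2 : ‖w - z‖ ^ 2
      = ‖x - z‖ ^ 2 - 2 * η * (inner ℝ (g x) (x - z) : ℝ) + η ^ 2 * ‖g x‖ ^ 2 := by
    have h1 : w - z = (x - z) - η • g x := by rw [hw]; abel
    rw [h1, norm_sub_sq_real, real_inner_smul_right, real_inner_comm, norm_smul,
      Real.norm_eq_abs, abs_of_pos hη]
    ring
  have hgb : ‖g x‖ ^ 2 ≤ G ^ 2 := by
    have := hgbd x
    nlinarith [norm_nonneg (g x)]
  have key : 2 * η * (inner ℝ (g x) (x - z) : ℝ)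
      ≤ ‖x - z‖ ^ 2 - ‖x' - z‖ ^ 2 + η ^ 2 * G ^ 2 := by nlinarith [sq_nonneg η]
  rw [div_add' _ _ _ (ne_of_gt hη), le_div_iff₀ hη]
  nlinarith [key]
end
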